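/- arXiv:1903.08355 — 2 statements merged into one kernel-verified Lean document; each statement's English description precedes it below -/
import Mathlib

section
/- Let A be a connected graded Gorenstein algebra over a field k with RHom_A(k, A) ≅ k[−n] (Gorenstein parameter a = 0, injective dimension n = 2), where k = A/A₊. Let f: k[−1] → A[1] be any nonzero morphism in D^b(gr-A) and let C be its cocone, giving an exact triangle A → C → k[−1] → A[1]. Then Hom_{D^b(gr-A)}(C[i], A(r)) = 0 for all i ∈ ℤ and all r ≤ 0. -/
open CategoryTheory CategoryTheory.Pretriangulated

/-- Let `A` be a connected graded Gorenstein algebra with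
`RHom_A(k, A) ≅ k[−2]` and Gorenstein parameter `0`, working in the triangulated category
`T = D^b(gr-A)`, `F`-linear over the base field.  Here `AA` plays the role of `A`,
`Kk` of `k`, `A_ r` of the grading twist `A(r)` (with `A_ 0 = AA`), and the Gorenstein
conditions are encoded as: `Hom(AA⟦i⟧, A(r)) = 0` for `r ≤ 0` unless `(i,r) = (0,0)`,
`Hom(Kk⟦i⟧, A(r)) = 0` for `r ≤ 0` unless `(i,r) = (−2,0)` (`Ext²_A(k,A) ≅ k`), and the
spaces `Hom(AA, AA)` and `Hom(Kk⟦−2⟧, AA)` are one-dimensional.  Let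
`f = w : k[−1] → A[1]` be any nonzero morphism and `C` its cocone, giving a distinguished
triangle `A → C → k[−1] → A[1]`.  Then `Hom(C⟦i⟧, A(r)) = 0` for all `i ∈ ℤ` and all
`r ≤ 0`. -/
theorem cocone_hom_vanishing
    {T : Type*} [Category T] [Preadditive T] [Limits.HasZeroObject T] [HasShift T ℤ]
    [∀ n : ℤ, (CategoryTheory.shiftFunctor T n).Additive] [Pretriangulated T]
    (F : Type*) [Field F] [Linear F T]
    (AA Cc Kk : T) (A_ : ℤ → T)
    (u : AA ⟶ Cc) (v : Cc ⟶ Kk⟦(-1 : ℤ)⟧) (w : Kk⟦(-1 : ℤ)⟧ ⟶ AA⟦(1 : ℤ)⟧)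
    (htri : Triangle.mk u v w ∈ distTriang T)
    (hw : w ≠ 0)
    (hA0 : A_ 0 = AA)
    (hAvan : ∀ (i r : ℤ), r ≤ 0 → ¬(i = 0 ∧ r = 0) → ∀ g : AA⟦i⟧ ⟶ A_ r, g = 0)
    (hKvan : ∀ (i r : ℤ), r ≤ 0 → ¬(i = -2 ∧ r = 0) → ∀ g : Kk⟦i⟧ ⟶ A_ r, g = 0)
    (h1 : Module.finrank F (AA ⟶ AA) = 1)
    (h2 : Module.finrank F (Kk⟦(-2 : ℤ)⟧ ⟶ AA) = 1) :
    ∀ (i r : ℤ), r ≤ 0 → ∀ g : Cc⟦i⟧ ⟶ A_ r, g = 0 := by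
  intro i r hr g
  -- the shifted triangle
  set Tr : Triangle T := Triangle.mk u v w with hTr
  have hTsh : (Triangle.shiftFunctor T i).obj Tr ∈ distTriang T := by
    rw [← Triangle.shiftFunctor_eq]
    exact Triangle.shift_distinguished Tr htri i
  set Tsh : Triangle T := (Triangle.shiftFunctor T i).obj Tr with hTshdef
  -- vanishing for maps out of `Kk⟦-1⟧⟦j⟧`
  have KZero : ∀ (j : ℤ), ¬(-1 + j = -2 ∧ r = 0) →
      ∀ h : (Kk⟦(-1 : ℤ)⟧)⟦j⟧ ⟶ A_ r, h = 0 := by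
    intro j hj h
    have e := (shiftFunctorAdd' T (-1) j (-1 + j) rfl).app Kk
    have h0 : e.hom ≫ h = 0 := hKvan (-1 + j) r hr hj _
    calc h = e.inv ≫ (e.hom ≫ h) := by simp
    _ = 0 := by rw [h0, Limits.comp_zero]
  -- the shifted connecting map is nonzero
  have hmor₃ : Tsh.mor₃ ≠ 0 := by
    intro h0
    have : i.negOnePow • (w⟦i⟧' ≫ (shiftFunctorComm T 1 i).hom.app AA) = 0 := h0
    rw [smul_eq_zero_iff_eq] at this
    have hwz : w⟦i⟧' = 0 := by
      have hm : w⟦i⟧' ≫ (shiftFunctorComm T 1 i).hom.app AA =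
          0 ≫ (shiftFunctorComm T 1 i).hom.app AA := by
        rw [this, Limits.zero_comp]
      exact (cancel_mono _).mp hm
    exact hw ((CategoryTheory.shiftFunctor T i).map_injective
      (by rw [hwz, Functor.map_zero]))
  by_cases hr0 : r = 0
  · subst hr0
    by_cases hi0 : i = 0
    · -- case (i, r) = (0, 0)
      subst hi0
      -- the canonical isomorphism `AA⟦0⟧ ≅ A_ 0`
      set ι : (AA⟦(0 : ℤ)⟧ ⟶ A_ 0) :=
        (CategoryTheory.shiftFunctorZero T ℤ).hom.app AA ≫ eqToHom hA0.symm with hι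
      have hιiso : IsIso ι := by
        rw [hι]; infer_instance
      have hone : (𝟙 AA : AA ⟶ AA) ≠ 0 := by
        intro h
        have : ∀ f : AA ⟶ AA, f = 0 := fun f => by
          rw [← Category.comp_id f, h, Limits.comp_zero]
        have hsub : Subsingleton (AA ⟶ AA) := ⟨fun a b => by rw [this a, this b]⟩
        rw [Module.finrank_zero_of_subsingleton] at h1
        exact one_ne_zero h1.symm
      have hιne : ι ≠ 0 := by
        intro h
        apply hone
        have : (CategoryTheory.shiftFunctorZero T ℤ).inv.app AA ≫ ι ≫ eqToHom hA0 =
            𝟙 AA := by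
          rw [hι]; simp
        rw [h] at this
        simp only [Limits.zero_comp, Limits.comp_zero] at this
        exact this.symm
      -- transport the 1-dimensionality of `Hom(AA, AA)`
      have hfin : Module.finrank F (AA⟦(0 : ℤ)⟧ ⟶ A_ 0) = 1 := by
        rw [← h1]
        exact (Linear.homCongr F ((CategoryTheory.shiftFunctorZero T ℤ).app AA).symm
          (eqToIso hA0.symm)).symm.finrank_eq
      -- `ψ = Tsh.mor₁ ≫ g` is a multiple of `ι`
      set ψ : AA⟦(0 : ℤ)⟧ ⟶ A_ 0 := Tsh.mor₁ ≫ g with hψ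
      obtain ⟨c, hc⟩ := (finrank_eq_one_iff_of_nonzero' ι hιne).mp hfin ψ
      -- use the inverse rotation to kill `ψ`
      have hinv : Tsh.invRotate ∈ distTriang T := inv_rot_of_distTriang Tsh hTsh
      have hδ : Tsh.invRotate.mor₁ ≫ Tsh.mor₁ = 0 :=
        comp_distTriang_mor_zero₁₂ _ hinv
      have hδψ : Tsh.invRotate.mor₁ ≫ ψ = 0 := by
        rw [hψ]; exact (Category.assoc _ _ _).symm.trans ((hδ =≫ g).trans Limits.zero_comp)
      have hδne : Tsh.invRotate.mor₁ ≠ 0 := by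
        intro h0
        apply hmor₃
        have h0' : -Tsh.mor₃⟦(-1 : ℤ)⟧' ≫ (shiftEquiv T (1 : ℤ)).unitIso.inv.app _ = 0 := h0
        have hthis : Tsh.mor₃⟦(-1 : ℤ)⟧' ≫
            (shiftEquiv T (1 : ℤ)).unitIso.inv.app Tsh.obj₁ = 0 := by
          have := neg_eq_zero.mp h0'
          simpa using this
        have hz : Tsh.mor₃⟦(-1 : ℤ)⟧' = 0 := by
          have hm : Tsh.mor₃⟦(-1 : ℤ)⟧' ≫ (shiftEquiv T (1 : ℤ)).unitIso.inv.app Tsh.obj₁ =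
              0 ≫ (shiftEquiv T (1 : ℤ)).unitIso.inv.app Tsh.obj₁ := by
            rw [hthis, Limits.zero_comp]
          exact (Iso.cancel_iso_inv_right _ _ ((shiftEquiv T (1 : ℤ)).unitIso.app Tsh.obj₁)).mp hm
        exact (CategoryTheory.shiftFunctor T (-1 : ℤ)).map_injective
          (by rw [hz, Functor.map_zero])
      have hδι : Tsh.invRotate.mor₁ ≫ ι ≠ 0 := by
        intro h0
        apply hδne
        exact (cancel_mono ι).mp (h0.trans Limits.zero_comp.symm)
      have hc0 : c = 0 := by
        have : c • (Tsh.invRotate.mor₁ ≫ ι) = 0 := by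
          exact (Linear.comp_smul _ _ _ _ c _).symm.trans ((congrArg (fun k => Tsh.invRotate.mor₁ ≫ k) hc).trans hδψ)
        rcases smul_eq_zero.mp this with h | h
        · exact h
        · exact absurd h hδι
      have hψ0 : ψ = 0 := by rw [← hc, hc0, zero_smul]
      -- conclude via exactness
      obtain ⟨h, hg⟩ := Triangle.yoneda_exact₂ Tsh hTsh g hψ0
      have h0 : h = 0 := KZero 0 (by omega) h
      rw [hg, h0]; exact Limits.comp_zero
    · by_cases hi1 : i = -1
      · -- case (i, r) = (-1, 0)
        subst hi1
        have hψ0 : Tsh.mor₁ ≫ g = 0 := hAvan (-1) 0 le_rfl (by omega) _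
        obtain ⟨h, hg⟩ := Triangle.yoneda_exact₂ Tsh hTsh g hψ0
        -- `h : Kk⟦-1⟧⟦-1⟧ ⟶ A_ 0`
        -- transport the 1-dimensionality of `Hom(Kk⟦-2⟧, AA)`
        have hfin : Module.finrank F ((Kk⟦(-1 : ℤ)⟧)⟦(-1 : ℤ)⟧ ⟶ A_ 0) = 1 := by
          rw [← h2]
          exact (Linear.homCongr F ((shiftFunctorAdd' T (-1) (-1) (-2) (by ring)).app Kk)
            (eqToIso hA0.symm)).finrank_eq.symm
        -- a nonzero element of that space in the image of `Tsh.mor₃ ≫ -`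
        set φ₀ : (AA⟦(-1 : ℤ)⟧)⟦(1 : ℤ)⟧ ⟶ A_ 0 :=
          ((shiftFunctorCompIsoId T (-1) 1 (by ring)).app AA).hom ≫ eqToHom hA0.symm
          with hφ₀
        have hφiso : IsIso φ₀ := by rw [hφ₀]; infer_instance
        set t : (Kk⟦(-1 : ℤ)⟧)⟦(-1 : ℤ)⟧ ⟶ A_ 0 := Tsh.mor₃ ≫ φ₀ with ht
        have htne : t ≠ 0 := by
          intro h0
          apply hmor₃
          exact (cancel_mono φ₀).mp (h0.trans Limits.zero_comp.symm)
        obtain ⟨c, hc⟩ := (finrank_eq_one_iff_of_nonzero' t htne).mp hfin h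
        have h23 : Tsh.mor₂ ≫ Tsh.mor₃ = 0 := comp_distTriang_mor_zero₂₃ Tsh hTsh
        rw [hg, ← hc, ht]
        exact (Linear.comp_smul _ _ _ _ c _).trans ((congrArg (c • ·) ((Category.assoc _ _ _).symm.trans
          ((h23 =≫ φ₀).trans Limits.zero_comp))).trans (smul_zero c))
      · -- generic case: both outer Hom-spaces vanish
        have hψ0 : Tsh.mor₁ ≫ g = 0 := hAvan i 0 le_rfl (by omega) _
        obtain ⟨h, hg⟩ := Triangle.yoneda_exact₂ Tsh hTsh g hψ0
        have h0 : h = 0 := KZero i (by omega) h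
        rw [hg, h0]; exact Limits.comp_zero
  · -- case `r < 0`
    have hψ0 : Tsh.mor₁ ≫ g = 0 := hAvan i r hr (by tauto) _
    obtain ⟨h, hg⟩ := Triangle.yoneda_exact₂ Tsh hTsh g hψ0
    have h0 : h = 0 := KZero i (by tauto) h
    rw [hg, h0]; exact Limits.comp_zero
end

section
/- Let R be a commutative domain and W ∈ R nonzero. Suppose f: F → G and g: G → F are R-linear maps between finitely generated free R-modules of the same rank with g ∘ f = W·id_F. Then f ∘ g = W·id_G. -/
open Matrix

lemma matrix_comm_of_smul_one {R : Type*} [CommRing R] [IsDomain R] {n : Type*}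
    [Fintype n] [DecidableEq n] (W : R) (hW : W ≠ 0)
    (A B : Matrix n n R) (h : B * A = W • 1) : A * B = W • 1 := by
  let K := FractionRing R
  let φ := algebraMap R K
  have hφ : Function.Injective φ := IsFractionRing.injective R K
  have hinj : Function.Injective (φ.mapMatrix : Matrix n n R →+* Matrix n n K) := by
    intro M N hMN
    ext i j
    exact hφ (congrFun (congrFun (congrArg (fun M : Matrix n n K => (M : n → n → K)) hMN) i) j)
  apply hinj
  have hmap1 : ((W • (1 : Matrix n n R)).map φ) = φ W • (1 : Matrix n n K) := by
    ext i j
    by_cases hij : i = j <;> simp [Matrix.one_apply, hij]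
  have hK : (B.map φ) * (A.map φ) = φ W • 1 := by
    have := congrArg (fun M : Matrix n n R => M.map φ) h
    simpa [Matrix.map_mul, hmap1] using this
  have hW' : φ W ≠ 0 := fun h0 => hW (hφ (by simpa using h0))
  have h1 : ((φ W)⁻¹ • B.map φ) * A.map φ = 1 := by
    rw [Matrix.smul_mul, hK, smul_smul, inv_mul_cancel₀ hW', one_smul]
  have h2 : A.map φ * ((φ W)⁻¹ • B.map φ) = 1 := mul_eq_one_comm.mp h1
  have h3 : (φ W) • (A.map φ * ((φ W)⁻¹ • B.map φ)) = φ W • 1 := by rw [h2]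
  rw [Matrix.mul_smul, smul_smul, mul_inv_cancel₀ hW', one_smul] at h3
  show (A * B).map φ = (W • (1 : Matrix n n R)).map φ
  rw [Matrix.map_mul, hmap1, h3]

/-- Let `R` be a commutative domain and `W ∈ R` nonzero.  If
`f : F → G` and `g : G → F` are `R`-linear maps between finitely generated free
`R`-modules of the same rank with `g ∘ f = W·id_F`, then `f ∘ g = W·id_G`. -/
theorem other_composite_eq_smul_id
    {R F G : Type*} [CommRing R] [IsDomain R]
    [AddCommGroup F] [Module R F] [Module.Free R F] [Module.Finite R F]
    [AddCommGroup G] [Module R G] [Module.Free R G] [Module.Finite R G]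
    (W : R) (hW : W ≠ 0)
    (hrank : Module.finrank R F = Module.finrank R G)
    (f : F →ₗ[R] G) (g : G →ₗ[R] F)
    (hgf : g ∘ₗ f = W • LinearMap.id) :
    f ∘ₗ g = W • LinearMap.id := by
  let bF0 := Module.finBasis R F
  let bF : Module.Basis (Fin (Module.finrank R G)) R F := bF0.reindex (finCongr hrank)
  let bG := Module.finBasis R G
  let A := LinearMap.toMatrix bF bG f
  let B := LinearMap.toMatrix bG bF g
  have hBA : B * A = W • 1 := by
    have := congrArg (LinearMap.toMatrix bF bF) hgf
    rwa [LinearMap.toMatrix_comp bF bG bF, _root_.map_smul, LinearMap.toMatrix_id] at this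
  have hAB : A * B = W • 1 := matrix_comm_of_smul_one W hW A B hBA
  apply (LinearMap.toMatrix bG bG).injective
  rw [LinearMap.toMatrix_comp bG bF bG, _root_.map_smul, LinearMap.toMatrix_id]
  exact hAB
end
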